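/- Let $r,s$ be real numbers with $0 \le r < 1 < s$, let $A > 0$, $B > 0$, $\mu > 0$, and let $C$ be a real number such that $0 < \mu C < G(t_0)$, where $G(t) = A t^{1-r} - B t^{s-r}$ and $t_0 = ((1-r)A/((s-r)B))^{1/(s-1)}$. Then there exist exactly two solutions $t^+, t^-$ of the equation $G(t) = \mu C$ in $(0,\infty)$; they satisfy $0 < t^+ < t_0 < t^-$, $G'(t^+) > 0$, $G'(t^-) < 0$, and, for $F(t) = \frac{t^2}{2}A - \frac{\mu t^{r+1}}{r+1}C - \frac{t^{s+1}}{s+1}B$, one has $F'(t^+) = F'(t^-) = 0$, $F''(t^+) > 0$ and $F''(t^-) < 0$. -/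

import Mathlib

open Real Set

/-- Lemma 4(b) (Lemma Char(b)), existence/uniqueness part: if `0 < μC < G(t₀)`, the
equation `G t = μC` has exactly two positive solutions `t⁺ < t₀ < t⁻`, with
`G'(t⁺) > 0`, `G'(t⁻) < 0`, `F'(t⁺) = F'(t⁻) = 0`, `F''(t⁺) > 0`, `F''(t⁻) < 0`. -/
theorem stmt_5 (r s A B μ C : ℝ) (hr0 : 0 ≤ r) (hr1 : r < 1) (hs : 1 < s)
    (hA : 0 < A) (hB : 0 < B) (hμ : 0 < μ)
    (G : ℝ → ℝ) (hG : ∀ t : ℝ, G t = A * t ^ (1 - r) - B * t ^ (s - r))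
    (t₀ : ℝ) (ht₀ : t₀ = ((1 - r) * A / ((s - r) * B)) ^ (1 / (s - 1)))
    (hC0 : 0 < μ * C) (hCG : μ * C < G t₀)
    (F : ℝ → ℝ)
    (hF : ∀ t : ℝ, F t = t ^ (2 : ℝ) / 2 * A - μ * t ^ (r + 1) / (r + 1) * C -
      t ^ (s + 1) / (s + 1) * B) :
    ∃ tp tm : ℝ, 0 < tp ∧ tp < t₀ ∧ t₀ < tm ∧
      G tp = μ * C ∧ G tm = μ * C ∧
      (∀ t : ℝ, 0 < t → G t = μ * C → t = tp ∨ t = tm) ∧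
      0 < deriv G tp ∧ deriv G tm < 0 ∧
      deriv F tp = 0 ∧ deriv F tm = 0 ∧
      0 < deriv (deriv F) tp ∧ deriv (deriv F) tm < 0 := by
  have hGf : G = fun t => A * t ^ (1 - r) - B * t ^ (s - r) := funext hG
  have hFf : F = fun t => t ^ (2 : ℝ) / 2 * A - μ * t ^ (r + 1) / (r + 1) * C -
      t ^ (s + 1) / (s + 1) * B := funext hF
  subst hGf hFf
  have hs1 : (0:ℝ) < s - 1 := by linarith
  have h1r : (0:ℝ) < 1 - r := by linarith
  have hsr : (0:ℝ) < s - r := by linarith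
  have hK : 0 < (1 - r) * A / ((s - r) * B) := by positivity
  have ht₀pos : 0 < t₀ := by rw [ht₀]; positivity
  have ht₀K : t₀ ^ (s - 1) = (1 - r) * A / ((s - r) * B) := by
    rw [ht₀, ← Real.rpow_mul hK.le, one_div_mul_cancel hs1.ne', Real.rpow_one]
  -- sign of E t = (1-r)A - (s-r)B t^(s-1)
  have hEpos : ∀ t : ℝ, 0 ≤ t → t < t₀ → 0 < (1 - r) * A - (s - r) * B * t ^ (s - 1) := by
    intro t ht htt
    have h1 : t ^ (s - 1) < (1 - r) * A / ((s - r) * B) :=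
      ht₀K ▸ Real.rpow_lt_rpow ht htt hs1
    rw [lt_div_iff₀ (by positivity)] at h1
    nlinarith
  have hEneg : ∀ t : ℝ, t₀ < t → (1 - r) * A - (s - r) * B * t ^ (s - 1) < 0 := by
    intro t htt
    have h1 : (1 - r) * A / ((s - r) * B) < t ^ (s - 1) :=
      ht₀K ▸ Real.rpow_lt_rpow ht₀pos.le htt hs1
    rw [div_lt_iff₀ (by positivity)] at h1
    nlinarith
  -- derivative of G
  have hGd : ∀ t : ℝ, 0 < t →
      HasDerivAt (fun t => A * t ^ (1 - r) - B * t ^ (s - r))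
        (t ^ (-r) * ((1 - r) * A - (s - r) * B * t ^ (s - 1))) t := by
    intro t ht
    have d1 : HasDerivAt (fun t : ℝ => t ^ (1 - r)) ((1 - r) * t ^ (1 - r - 1)) t :=
      Real.hasDerivAt_rpow_const (Or.inl ht.ne')
    have d2 : HasDerivAt (fun t : ℝ => t ^ (s - r)) ((s - r) * t ^ (s - r - 1)) t :=
      Real.hasDerivAt_rpow_const (Or.inl ht.ne')
    have := (d1.const_mul A).sub (d2.const_mul B)
    convert this using 1
    case e'_4 => rfl
    case e'_5 => rfl
    case e'_8 => rfl
    have e1 : t ^ ((1:ℝ) - r - 1) = t ^ (-r) := by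
      congr 1; ring
    have e2 : t ^ (s - r - 1) = t ^ (s - 1) * t ^ (-r) := by
      rw [← Real.rpow_add ht]; congr 1; ring
    rw [e1, e2]; ring
  -- continuity of G on [0, ∞)
  have hrc : ∀ p : ℝ, 0 ≤ p → ContinuousOn (fun t : ℝ => t ^ p) (Ici 0) := by
    intro p hp x _
    exact (Real.continuousAt_rpow_const x p (Or.inr hp)).continuousWithinAt
  have hGcont : ContinuousOn (fun t : ℝ => A * t ^ (1 - r) - B * t ^ (s - r)) (Ici 0) :=
    (continuousOn_const.mul (hrc _ h1r.le)).sub (continuousOn_const.mul (hrc _ hsr.le))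
  -- monotonicity
  have hmono : StrictMonoOn (fun t : ℝ => A * t ^ (1 - r) - B * t ^ (s - r)) (Icc 0 t₀) := by
    apply strictMonoOn_of_deriv_pos (convex_Icc 0 t₀) (hGcont.mono Icc_subset_Ici_self)
    intro x hx
    rw [interior_Icc] at hx
    rw [(hGd x hx.1).deriv]
    exact mul_pos (Real.rpow_pos_of_pos hx.1 _) (hEpos x hx.1.le hx.2)
  have hanti : StrictAntiOn (fun t : ℝ => A * t ^ (1 - r) - B * t ^ (s - r)) (Ici t₀) := by
    apply strictAntiOn_of_deriv_neg (convex_Ici t₀)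
      (hGcont.mono (Ici_subset_Ici.mpr ht₀pos.le))
    intro x hx
    rw [interior_Ici] at hx
    rw [(hGd x (ht₀pos.trans hx)).deriv]
    exact mul_neg_of_pos_of_neg (Real.rpow_pos_of_pos (ht₀pos.trans hx) _) (hEneg x hx)
  -- existence of tp
  have hG0 : A * (0:ℝ) ^ (1 - r) - B * (0:ℝ) ^ (s - r) = 0 := by
    rw [Real.zero_rpow h1r.ne', Real.zero_rpow hsr.ne']; ring
  obtain ⟨tp, htpmem, htpG⟩ :=
    intermediate_value_Ioo ht₀pos.le (hGcont.mono Icc_subset_Ici_self)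
      (show μ * C ∈ Ioo (A * (0:ℝ) ^ (1 - r) - B * (0:ℝ) ^ (s - r))
          (A * t₀ ^ (1 - r) - B * t₀ ^ (s - r)) from by rw [hG0]; exact ⟨hC0, hCG⟩)
  -- existence of tm
  have hc0 : (0:ℝ) ≤ (A / B) ^ (1 / (s - 1)) := Real.rpow_nonneg (by positivity) _
  have hcs : ((A / B) ^ (1 / (s - 1))) ^ (s - 1) = A / B := by
    rw [← Real.rpow_mul (by positivity), one_div_mul_cancel hs1.ne', Real.rpow_one]
  set T := max (t₀ + 1) ((A / B) ^ (1 / (s - 1)) + 1) with hTdef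
  have hTt₀ : t₀ < T := lt_of_lt_of_le (by linarith) (le_max_left _ _)
  have hTc : (A / B) ^ (1 / (s - 1)) < T := lt_of_lt_of_le (by linarith) (le_max_right _ _)
  have hT0 : 0 < T := lt_of_le_of_lt hc0 hTc
  have hGT : A * T ^ (1 - r) - B * T ^ (s - r) < 0 := by
    have h1 : A / B < T ^ (s - 1) := hcs ▸ Real.rpow_lt_rpow hc0 hTc hs1
    rw [div_lt_iff₀ hB] at h1
    have e : T ^ (s - r) = T ^ (s - 1) * T ^ (1 - r) := by
      rw [← Real.rpow_add hT0]; congr 1; ring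
    have hTp : 0 < T ^ (1 - r) := Real.rpow_pos_of_pos hT0 _
    rw [e]
    nlinarith
  obtain ⟨tm, htmmem, htmG⟩ :=
    intermediate_value_Ioo' hTt₀.le
      (hGcont.mono (fun x hx => le_trans ht₀pos.le hx.1))
      (show μ * C ∈ Ioo (A * T ^ (1 - r) - B * T ^ (s - r))
          (A * t₀ ^ (1 - r) - B * t₀ ^ (s - r)) from ⟨hGT.trans hC0, hCG⟩)
  have htp0 : 0 < tp := htpmem.1
  have htpt₀ : tp < t₀ := htpmem.2
  have ht₀tm : t₀ < tm := htmmem.1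
  have htm0 : 0 < tm := ht₀pos.trans ht₀tm
  -- derivative of F
  have hFd : ∀ t : ℝ, HasDerivAt
      (fun t : ℝ => t ^ (2 : ℝ) / 2 * A - μ * t ^ (r + 1) / (r + 1) * C -
        t ^ (s + 1) / (s + 1) * B)
      (A * t - μ * C * t ^ r - B * t ^ s) t := by
    intro t
    have d2 : HasDerivAt (fun t : ℝ => t ^ (2:ℝ)) (2 * t ^ ((2:ℝ) - 1)) t :=
      Real.hasDerivAt_rpow_const (Or.inr one_le_two)
    have dr : HasDerivAt (fun t : ℝ => t ^ (r + 1)) ((r + 1) * t ^ (r + 1 - 1)) t :=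
      Real.hasDerivAt_rpow_const (Or.inr (by linarith))
    have ds : HasDerivAt (fun t : ℝ => t ^ (s + 1)) ((s + 1) * t ^ (s + 1 - 1)) t :=
      Real.hasDerivAt_rpow_const (Or.inr (by linarith))
    have h := (((d2.div_const 2).mul_const A).sub
      (((dr.const_mul μ).div_const (r + 1)).mul_const C)).sub
      ((ds.div_const (s + 1)).mul_const B)
    convert h using 1
    case e'_4 => rfl
    case e'_5 => rfl
    case e'_8 => rfl
    have e2 : t ^ ((2:ℝ) - 1) = t := by norm_num
    have er : t ^ (r + 1 - 1) = t ^ r := by congr 1; ring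
    have es : t ^ (s + 1 - 1) = t ^ s := by congr 1; ring
    rw [e2, er, es]
    field_simp
  have hdF : deriv (fun t : ℝ => t ^ (2 : ℝ) / 2 * A - μ * t ^ (r + 1) / (r + 1) * C -
      t ^ (s + 1) / (s + 1) * B) = fun t => A * t - μ * C * t ^ r - B * t ^ s :=
    funext fun t => (hFd t).deriv
  -- F' vanishes at solutions
  have key0 : ∀ t : ℝ, 0 < t → A * t ^ (1 - r) - B * t ^ (s - r) = μ * C →
      A * t - μ * C * t ^ r - B * t ^ s = 0 := by
    intro t ht hGt
    have e1 : t ^ (1 - r) * t ^ r = t := by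
      rw [← Real.rpow_add ht]
      norm_num
    have e2 : t ^ (s - r) * t ^ r = t ^ s := by
      rw [← Real.rpow_add ht]
      congr 1; ring
    linear_combination (-A) * e1 + B * e2 + t ^ r * hGt
  -- F'' at solutions equals E
  have key2 : ∀ t : ℝ, 0 < t → A * t ^ (1 - r) - B * t ^ (s - r) = μ * C →
      deriv (fun t : ℝ => A * t - μ * C * t ^ r - B * t ^ s) t =
        (1 - r) * A - (s - r) * B * t ^ (s - 1) := by
    intro t ht hGt
    have dr : HasDerivAt (fun t : ℝ => t ^ r) (r * t ^ (r - 1)) t :=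
      Real.hasDerivAt_rpow_const (Or.inl ht.ne')
    have ds : HasDerivAt (fun t : ℝ => t ^ s) (s * t ^ (s - 1)) t :=
      Real.hasDerivAt_rpow_const (Or.inl ht.ne')
    have h := (((hasDerivAt_id t).const_mul A).sub (dr.const_mul (μ * C))).sub
      (ds.const_mul B)
    have h' : HasDerivAt (fun t : ℝ => A * t - μ * C * t ^ r - B * t ^ s)
        (A * 1 - μ * C * (r * t ^ (r - 1)) - B * (s * t ^ (s - 1))) t := h
    rw [h'.deriv]
    have e1 : t ^ (1 - r) * t ^ (r - 1) = 1 := by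
      rw [← Real.rpow_add ht]
      norm_num
    have e2 : t ^ (s - r) * t ^ (r - 1) = t ^ (s - 1) := by
      rw [← Real.rpow_add ht]
      congr 1; ring
    linear_combination (-(r * A)) * e1 + (r * B) * e2 + (r * t ^ (r - 1)) * hGt
  refine ⟨tp, tm, htp0, htpt₀, ht₀tm, htpG, htmG, ?_, ?_, ?_, ?_, ?_, ?_, ?_⟩
  · -- uniqueness
    intro t ht hGt
    rcases lt_trichotomy t t₀ with h | h | h
    · exact Or.inl (hmono.injOn ⟨ht.le, h.le⟩ ⟨htp0.le, htpt₀.le⟩ (hGt.trans htpG.symm))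
    · exact absurd (h ▸ hGt) (by intro hh; rw [hh] at hCG; exact lt_irrefl _ hCG)
    · exact Or.inr (hanti.injOn h.le ht₀tm.le (hGt.trans htmG.symm))
  · rw [(hGd tp htp0).deriv]
    exact mul_pos (Real.rpow_pos_of_pos htp0 _) (hEpos tp htp0.le htpt₀)
  · rw [(hGd tm htm0).deriv]
    exact mul_neg_of_pos_of_neg (Real.rpow_pos_of_pos htm0 _) (hEneg tm ht₀tm)
  · rw [hdF]; exact key0 tp htp0 htpG
  · rw [hdF]; exact key0 tm htm0 htmG
  · rw [hdF, key2 tp htp0 htpG]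
    exact hEpos tp htp0.le htpt₀
  · rw [hdF, key2 tm htm0 htmG]
    exact hEneg tm ht₀tm
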